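/- Let K be a field and let I ⊆ K[x_1,…,x_n] be an ideal. If the initial ideal in_≺(I) with respect to some monomial order ≺ is generated by square-free monomials, then I is a radical ideal. -/

import Mathlib

open MvPolynomial

/-- `d` is the leading exponent (exponent of the leading monomial) of `f` with respect
to the monomial order `m`. -/
def IsLeadingExp {n : ℕ} {K : Type*} [Field K] (m : MonomialOrder (Fin n))
    (f : MvPolynomial (Fin n) K) (d : Fin n →₀ ℕ) : Prop :=
  d ∈ f.support ∧ ∀ e ∈ f.support, m.toSyn e ≤ m.toSyn d

/-- The initial ideal of `I` with respect to `m`: the ideal generated by the leading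
monomials of the nonzero elements of `I`. -/
noncomputable def initialIdeal {n : ℕ} {K : Type*} [Field K] (m : MonomialOrder (Fin n))
    (I : Ideal (MvPolynomial (Fin n) K)) : Ideal (MvPolynomial (Fin n) K) :=
  Ideal.span {g | ∃ f ∈ I, f ≠ 0 ∧ ∃ d, IsLeadingExp m f d ∧ g = monomial d (1 : K)}

section Aux
variable {n : ℕ} {K : Type*} [Field K] (m : MonomialOrder (Fin n))

lemma exists_isLeadingExp {f : MvPolynomial (Fin n) K} (hf : f ≠ 0) :
    ∃ d, IsLeadingExp m f d := by
  have hs : f.support.Nonempty := MvPolynomial.support_nonempty.mpr hf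
  obtain ⟨d, hd, hmax⟩ := f.support.exists_max_image m.toSyn hs
  exact ⟨d, hd, hmax⟩

lemma isLeadingExp_mul {f g : MvPolynomial (Fin n) K} {d e : Fin n →₀ ℕ}
    (hf : IsLeadingExp m f d) (hg : IsLeadingExp m g e) :
    IsLeadingExp m (f * g) (d + e) := by
  constructor
  · rw [MvPolynomial.mem_support_iff, MvPolynomial.coeff_mul]
    rw [Finset.sum_eq_single_of_mem (d, e) (Finset.HasAntidiagonal.mem_antidiagonal.mpr rfl)]
    · exact mul_ne_zero (MvPolynomial.mem_support_iff.mp hf.1)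
        (MvPolynomial.mem_support_iff.mp hg.1)
    · rintro ⟨a, b⟩ hab hne
      rw [Finset.HasAntidiagonal.mem_antidiagonal] at hab
      by_contra hc
      have ha : a ∈ f.support := by
        rw [MvPolynomial.mem_support_iff]; intro h; apply hc; rw [h, zero_mul]
      have hb : b ∈ g.support := by
        rw [MvPolynomial.mem_support_iff]; intro h; apply hc; rw [h, mul_zero]
      have h1 := hf.2 a ha
      have h2 := hg.2 b hb
      have hsum : m.toSyn a + m.toSyn b = m.toSyn d + m.toSyn e := by
        rw [← map_add, ← map_add, hab]
      have had : m.toSyn a = m.toSyn d := by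
        by_contra hlt
        exact absurd hsum
          (ne_of_lt (add_lt_add_of_lt_of_le (lt_of_le_of_ne h1 hlt) h2))
      have hbe : m.toSyn b = m.toSyn e := by
        rw [had] at hsum
        exact add_left_cancel hsum
      exact hne (Prod.ext (m.toSyn.injective had) (m.toSyn.injective hbe))
  · intro c hc
    obtain ⟨a, ha, b, hb, rfl⟩ := Finset.mem_add.mp (MvPolynomial.support_mul f g hc)
    rw [map_add, map_add]
    exact add_le_add (hf.2 a ha) (hg.2 b hb)

lemma isLeadingExp_monomial (e : Fin n →₀ ℕ) :
    IsLeadingExp m (monomial e (1 : K)) e := by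
  constructor
  · simp [MvPolynomial.support_monomial]
  · intro c hc
    simp [MvPolynomial.support_monomial] at hc
    exact le_of_eq (congrArg _ hc.symm)

lemma initialIdeal_eq_span_image (I : Ideal (MvPolynomial (Fin n) K)) :
    initialIdeal m I = Ideal.span ((fun d => (monomial d (1 : K)
      : MvPolynomial (Fin n) K)) '' {d | ∃ g ∈ I, g ≠ 0 ∧ IsLeadingExp m g d}) := by
  unfold initialIdeal
  congr 1
  ext p
  constructor
  · rintro ⟨f, hfI, hf0, d, hld, rfl⟩
    exact ⟨d, ⟨f, hfI, hf0, hld⟩, rfl⟩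
  · rintro ⟨d, ⟨f, hfI, hf0, hld⟩, rfl⟩
    exact ⟨f, hfI, hf0, d, hld, rfl⟩

end Aux

theorem stmt_15 (n : ℕ) (K : Type*) [Field K]
    (I : Ideal (MvPolynomial (Fin n) K)) (m : MonomialOrder (Fin n))
    (S : Set (Fin n →₀ ℕ)) (hsf : ∀ d ∈ S, ∀ i, d i ≤ 1)
    (hgen : initialIdeal m I =
      Ideal.span ((fun d => (monomial d (1 : K) : MvPolynomial (Fin n) K)) '' S)) :
    I.IsRadical := by
  have key : ∀ s : m.syn, ∀ f : MvPolynomial (Fin n) K,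
      (∀ e ∈ f.support, m.toSyn e ≤ s) → f ^ 2 ∈ I → f ∈ I := by
    intro s
    induction s using WellFoundedLT.induction with
    | _ s IH =>
    intro f hbound hf2
    by_cases hf0 : f = 0
    · rw [hf0]; exact I.zero_mem
    obtain ⟨d, hd⟩ := exists_isLeadingExp m hf0
    have hf2le : IsLeadingExp m (f ^ 2) (d + d) := by
      have := isLeadingExp_mul m hd hd
      rwa [← sq] at this
    have hne2 : f ^ 2 ≠ 0 := pow_ne_zero _ hf0
    have hmem : (monomial (d + d) (1 : K) : MvPolynomial (Fin n) K) ∈ initialIdeal m I :=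
      Ideal.subset_span ⟨f ^ 2, hf2, hne2, d + d, hf2le, rfl⟩
    rw [hgen, MvPolynomial.mem_ideal_span_monomial_image] at hmem
    obtain ⟨s₀, hs₀S, hs₀le⟩ := hmem (d + d) (by
      simp [MvPolynomial.support_monomial])
    have hs₀d : s₀ ≤ d := by
      rw [Finsupp.le_def]
      intro i
      have h1 := hsf s₀ hs₀S i
      have h2 : s₀ i ≤ (d + d) i := Finsupp.le_def.mp hs₀le i
      rw [Finsupp.add_apply] at h2
      omega
    have hmonod : (monomial d (1 : K) : MvPolynomial (Fin n) K) ∈ initialIdeal m I := by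
      rw [hgen, MvPolynomial.mem_ideal_span_monomial_image]
      intro xi hxi
      simp [MvPolynomial.support_monomial] at hxi
      exact ⟨s₀, hs₀S, hxi ▸ hs₀d⟩
    rw [initialIdeal_eq_span_image, MvPolynomial.mem_ideal_span_monomial_image] at hmonod
    obtain ⟨d₀, ⟨g, hgI, hg0, hgle⟩, hd₀d⟩ := hmonod d (by
      simp [MvPolynomial.support_monomial])
    set h : MvPolynomial (Fin n) K := monomial (d - d₀) (1 : K) * g with hh
    have hhI : h ∈ I := Ideal.mul_mem_left _ _ hgI
    have hhle : IsLeadingExp m h d := by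
      have := isLeadingExp_mul m (isLeadingExp_monomial m (d - d₀)) hgle
      rwa [tsub_add_cancel_of_le hd₀d] at this
    have hhc : coeff d h ≠ 0 := MvPolynomial.mem_support_iff.mp hhle.1
    set c : K := coeff d f / coeff d h with hc
    set f' : MvPolynomial (Fin n) K := f - C c * h with hf'
    have hChI : C c * h ∈ I := Ideal.mul_mem_left _ _ hhI
    have hf'2 : f' ^ 2 ∈ I := by
      have heq : Ideal.Quotient.mk I f' = Ideal.Quotient.mk I f := by
        rw [Ideal.Quotient.eq]
        have : f' - f = -(C c * h) := by rw [hf']; ring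
        rw [this]
        exact I.neg_mem hChI
      rw [← Ideal.Quotient.eq_zero_iff_mem, map_pow, heq, ← map_pow,
        Ideal.Quotient.eq_zero_iff_mem]
      exact hf2
    have hcoe : coeff d f' = 0 := by
      rw [hf', MvPolynomial.coeff_sub, MvPolynomial.coeff_C_mul, hc,
        div_mul_cancel₀ _ hhc, sub_self]
    have hsubC : (C c * h).support ⊆ h.support := by
      intro e he
      rw [MvPolynomial.mem_support_iff, MvPolynomial.coeff_C_mul] at he
      rw [MvPolynomial.mem_support_iff]
      intro hz
      exact he (by rw [hz, mul_zero])
    have hstrict : ∀ e ∈ f'.support, m.toSyn e < m.toSyn d := by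
      intro e he
      have hef : e ∈ f.support ∪ (C c * h).support :=
        MvPolynomial.support_sub _ _ _ he
      have hle : m.toSyn e ≤ m.toSyn d := by
        rcases Finset.mem_union.mp hef with h1 | h1
        · exact hd.2 e h1
        · exact hhle.2 e (hsubC h1)
      refine lt_of_le_of_ne hle fun heq => ?_
      have : e = d := m.toSyn.injective heq
      rw [this] at he
      exact MvPolynomial.mem_support_iff.mp he hcoe
    by_cases hf'0 : f' = 0
    · have : f = C c * h := by
        have := hf'0
        rw [hf', sub_eq_zero] at this
        exact this
      rw [this]; exact hChI
    · obtain ⟨d', hd'⟩ := exists_isLeadingExp m hf'0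
      have hltd : m.toSyn d' < s := lt_of_lt_of_le (hstrict d' hd'.1) (hbound d hd.1)
      have hf'I : f' ∈ I := IH (m.toSyn d') hltd f' (fun e he => hd'.2 e he) hf'2
      have : f = f' + C c * h := by rw [hf']; ring
      rw [this]
      exact I.add_mem hf'I hChI
  rw [Ideal.isRadical_iff_pow_one_lt 2 one_lt_two]
  intro r hr
  by_cases hr0 : r = 0
  · rw [hr0]; exact I.zero_mem
  · obtain ⟨d, hd⟩ := exists_isLeadingExp m hr0
    exact key (m.toSyn d) r hd.2 hr
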